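/- Let ψ : F(2) → ℤ be a surjective homomorphism from the free group of rank 2 onto ℤ. Then ker(ψ)/[ker(ψ),ker(ψ)] is a free module of rank 1 over the group ring ℤ[ℤ] ≅ ℤ[t,t⁻¹]. -/

import Mathlib

/-- Conjugation by `g : G` on the kernel of `φ`. -/
def conjKer {G Γ : Type*} [Group G] [Group Γ] (φ : G →* Γ) (g : G) : φ.ker →* φ.ker where
  toFun k := ⟨g * (k : G) * g⁻¹, (MonoidHom.normal_ker φ).conj_mem _ k.2 g⟩
  map_one' := by ext; simp
  map_mul' x y := by ext; simp [mul_assoc]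

/-- The induced conjugation action on the abelianization of the kernel of `φ`. -/
def conjAb {G Γ : Type*} [Group G] [Group Γ] (φ : G →* Γ) (g : G) :
    Abelianization φ.ker →* Abelianization φ.ker :=
  Abelianization.map (conjKer φ g)

/-- The property that a `ℤ[t,t⁻¹]`-module structure on the abelianization of `ker ψ` is the
one induced by conjugation (a generator `t` of `ℤ` acts by conjugation by any preimage of `t`),
and that with this structure the module is free of rank one, i.e. isomorphic to `ℤ[t,t⁻¹]`. -/
def FreeRankOneWithConjAction (ψ : FreeGroup (Fin 2) →* Multiplicative ℤ)
    (inst : Module (LaurentPolynomial ℤ) (Additive (Abelianization ψ.ker))) : Prop :=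
  letI := inst
  (∀ (h : FreeGroup (Fin 2)) (x : Abelianization ψ.ker),
      ψ h = Multiplicative.ofAdd (1 : ℤ) →
      (LaurentPolynomial.T 1 : LaurentPolynomial ℤ) • (Additive.ofMul x) =
        Additive.ofMul (conjAb ψ h x)) ∧
  Nonempty ((Additive (Abelianization ψ.ker)) ≃ₗ[LaurentPolynomial ℤ] LaurentPolynomial ℤ)

open FreeGroup Multiplicative

namespace Stmt4Aux

abbrev F2 := FreeGroup (Fin 2)

def ga : F2 := FreeGroup.of 0
def gb : F2 := FreeGroup.of 1

def ψ₀ : F2 →* Multiplicative ℤ := FreeGroup.lift (fun i => if i = 0 then ofAdd (1:ℤ) else 1)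

@[simp] lemma ψ₀_a : ψ₀ ga = ofAdd 1 := by simp [ψ₀, ga]
@[simp] lemma ψ₀_b : ψ₀ gb = 1 := by simp [ψ₀, gb]

/-- shift action of ℤ on FreeGroup ℤ -/
def shiftHom : Multiplicative ℤ →* MulAut (FreeGroup ℤ) where
  toFun g := (FreeGroup.freeGroupCongr (Equiv.addRight (toAdd g)))
  map_one' := by
    apply MulEquiv.toMonoidHom_injective
    apply FreeGroup.ext_hom
    intro m
    simp
  map_mul' g h := by
    apply MulEquiv.toMonoidHom_injective
    apply FreeGroup.ext_hom
    intro m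
    simp only [MulEquiv.toMonoidHom_eq_coe, MonoidHom.coe_comp, MonoidHom.coe_coe,
      Function.comp_apply, FreeGroup.freeGroupCongr_apply, FreeGroup.map.of, MulAut.mul_apply]
    norm_num [FreeGroup.freeGroupCongr_apply]
    congr 1
    ring

@[simp] lemma shiftHom_of (g : Multiplicative ℤ) (m : ℤ) :
    shiftHom g (FreeGroup.of m) = FreeGroup.of (m + toAdd g) := by
  simp [shiftHom]

end Stmt4Aux

namespace Stmt4Aux

open SemidirectProduct

abbrev SDP := SemidirectProduct (FreeGroup ℤ) (Multiplicative ℤ) shiftHom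

def fN : FreeGroup ℤ →* F2 := FreeGroup.lift (fun m => ga ^ m * gb * ga ^ (-m))

@[simp] lemma fN_of (m : ℤ) : fN (FreeGroup.of m) = ga ^ m * gb * ga ^ (-m) := by
  simp [fN]

def fG : Multiplicative ℤ →* F2 := zpowersHom F2 ga

lemma hcomp : ∀ g, fN.comp (shiftHom g).toMonoidHom =
    (MulAut.conj (fG g)).toMonoidHom.comp fN := by
  intro g
  apply FreeGroup.ext_hom
  intro m
  simp only [MulEquiv.toMonoidHom_eq_coe, MonoidHom.coe_comp, MonoidHom.coe_coe,
    Function.comp_apply, shiftHom_of, fN_of, MulAut.conj_apply]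
  simp only [fG, zpowersHom_apply]
  rw [zpow_add, neg_add, zpow_add]
  group

def fwd : SDP →* F2 := SemidirectProduct.lift fN fG hcomp

def bwd : F2 →* SDP :=
  FreeGroup.lift (fun i => if i = 0 then inr (ofAdd (1:ℤ)) else inl (FreeGroup.of (0:ℤ)))

@[simp] lemma bwd_a : bwd ga = inr (ofAdd 1) := by simp [bwd, ga]
@[simp] lemma bwd_b : bwd gb = inl (FreeGroup.of 0) := by simp [bwd, gb]

lemma fwd_bwd : fwd.comp bwd = MonoidHom.id F2 := by
  apply FreeGroup.ext_hom
  intro i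
  fin_cases i
  · show fwd (bwd ga) = ga
    simp [fwd, fG]
  · show fwd (bwd gb) = gb
    simp [fwd]

lemma bwd_fN : bwd.comp fN = inl := by
  apply FreeGroup.ext_hom
  intro m
  simp only [MonoidHom.coe_comp, Function.comp_apply, fN_of]
  rw [MonoidHom.map_mul bwd, MonoidHom.map_mul bwd, MonoidHom.map_zpow bwd, MonoidHom.map_zpow bwd, bwd_a, bwd_b, zpow_neg, ← map_zpow inr,
    ← _root_.map_inv inr, ← SemidirectProduct.inl_aut]
  congr 1
  rw [shiftHom_of]
  simp

lemma rightHom_bwd : rightHom.comp bwd = ψ₀ := by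
  apply FreeGroup.ext_hom
  intro i
  fin_cases i
  · show rightHom (bwd ga) = ψ₀ ga
    simp
  · show rightHom (bwd gb) = ψ₀ gb
    simp

lemma fN_inj : Function.Injective fN := by
  have h : ∀ x, bwd (fN x) = inl x := fun x => DFunLike.congr_fun bwd_fN x
  intro x y hxy
  apply inl_injective (φ := shiftHom)
  rw [← h, ← h, hxy]

@[simp] lemma ψ₀_fN (x : FreeGroup ℤ) : ψ₀ (fN x) = 1 := by
  have h : ∀ x, bwd (fN x) = inl x := fun x => DFunLike.congr_fun bwd_fN x
  have h2 := DFunLike.congr_fun rightHom_bwd (fN x)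
  simp only [MonoidHom.coe_comp, Function.comp_apply, h] at h2
  rw [← h2]
  simp

lemma fN_surj_ker : ∀ g, ψ₀ g = 1 → ∃ x, fN x = g := by
  intro g hg
  refine ⟨(bwd g).left, ?_⟩
  have h2 := DFunLike.congr_fun rightHom_bwd g
  simp only [MonoidHom.coe_comp, Function.comp_apply] at h2
  have hright : (bwd g).right = 1 := by rw [← rightHom_eq_right]; simp [h2, hg]
  have : bwd g = inl (bwd g).left := by
    conv_lhs => rw [← inl_left_mul_inr_right (bwd g)]
    rw [hright, MonoidHom.map_one inr, mul_one]
  have h3 := DFunLike.congr_fun fwd_bwd g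
  simp only [MonoidHom.coe_comp, Function.comp_apply, MonoidHom.id_apply] at h3
  have h4 : g = fwd (inl (bwd g).left) := by
    conv_lhs => rw [← h3, this]
  conv_rhs => rw [h4]
  rw [fwd, SemidirectProduct.lift_inl]

lemma conj_fN (m : ℤ) : ga * fN (FreeGroup.of m) * ga⁻¹ = fN (FreeGroup.of (m+1)) := by
  simp only [fN_of]
  rw [zpow_add, neg_add, zpow_add]
  group

end Stmt4Aux

namespace Stmt4Aux

def mk2 (u v : F2) : F2 →* F2 := FreeGroup.lift (fun i => if i = 0 then u else v)

@[simp] lemma mk2_a (u v : F2) : mk2 u v ga = u := by simp [mk2, ga]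
@[simp] lemma mk2_b (u v : F2) : mk2 u v gb = v := by simp [mk2, gb]

lemma hom_ext2 {G : Type*} [Group G] {f g : F2 →* G} (ha : f ga = g ga) (hb : f gb = g gb) : f = g := by
  apply FreeGroup.ext_hom
  intro i
  fin_cases i
  · exact ha
  · exact hb

/-- inversion of the first generator -/
def invA : F2 ≃* F2 :=
  MonoidHom.toMulEquiv (mk2 ga⁻¹ gb) (mk2 ga⁻¹ gb)
    (hom_ext2 (by simp) (by simp)) (hom_ext2 (by simp) (by simp))

@[simp] lemma invA_a : invA ga = ga⁻¹ := by simp [invA]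
@[simp] lemma invA_b : invA gb = gb := by simp [invA]

/-- the automorphism `a ↦ b, b ↦ a * b^(-k)` with inverse `a ↦ b * a^k, b ↦ a` -/
def shear (k : ℤ) : F2 ≃* F2 :=
  MonoidHom.toMulEquiv (mk2 gb (ga * gb ^ (-k))) (mk2 (gb * ga ^ k) ga)
    (hom_ext2 (by simp) (by simp [map_zpow]))
    (hom_ext2 (by simp [map_zpow]) (by simp))

@[simp] lemma shear_a (k : ℤ) : shear k ga = gb := by simp [shear]
@[simp] lemma shear_b (k : ℤ) : shear k gb = ga * gb ^ (-k) := by simp [shear]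

lemma step (ψ : F2 →* Multiplicative ℤ) (γ : F2 ≃* F2)
    (h : ∃ α : F2 ≃* F2, ((ψ.comp γ.toMonoidHom).comp α.toMonoidHom) = ψ₀) :
    ∃ α : F2 ≃* F2, ψ.comp α.toMonoidHom = ψ₀ := by
  obtain ⟨α, hα⟩ := h
  exact ⟨α.trans γ, by rw [← hα]; rfl⟩

lemma exists_aut (ψ : F2 →* Multiplicative ℤ) (hψ : Function.Surjective ψ) :
    ∃ α : F2 ≃* F2, ψ.comp α.toMonoidHom = ψ₀ := by
  suffices H : ∀ n : ℕ, ∀ ψ : F2 →* Multiplicative ℤ, Function.Surjective ψ →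
      (toAdd (ψ gb)).natAbs = n → ∃ α : F2 ≃* F2, ψ.comp α.toMonoidHom = ψ₀ by
    exact H _ ψ hψ rfl
  intro n
  induction n using Nat.strong_induction_on with
  | _ n ih =>
    intro ψ hψ hn
    by_cases hq : toAdd (ψ gb) = 0
    · -- base case
      have hdvd : ∀ g, toAdd (ψ ga) ∣ toAdd (ψ g) := by
        intro g
        induction g using FreeGroup.induction_on with
        | C1 => simp
        | of i =>
          fin_cases i
          · exact dvd_rfl
          · show toAdd (ψ ga) ∣ toAdd (ψ gb)
            rw [hq]
            exact dvd_zero _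
        | inv_of x h => rw [_root_.map_inv ψ, toAdd_inv]; exact h.neg_right
        | mul x y hx hy => rw [_root_.map_mul ψ, toAdd_mul]; exact dvd_add hx hy
      obtain ⟨g, hg⟩ := hψ (ofAdd 1)
      have h1 : toAdd (ψ ga) ∣ 1 := by simpa [hg] using hdvd g
      have hb1 : ψ gb = 1 := by
        rw [← ofAdd_toAdd (ψ gb), hq]; rfl
      rcases Int.isUnit_iff.mp (isUnit_of_dvd_one h1) with hp | hp
      · refine ⟨MulEquiv.refl F2, hom_ext2 ?_ ?_⟩
        · show ψ ga = ψ₀ ga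
          rw [← ofAdd_toAdd (ψ ga), hp]; simp
        · show ψ gb = ψ₀ gb
          simp [hb1]
      · refine ⟨invA, hom_ext2 ?_ ?_⟩
        · show ψ (invA ga) = ψ₀ ga
          rw [invA_a, _root_.map_inv ψ, ← ofAdd_toAdd (ψ ga), hp]
          simp
        · show ψ (invA gb) = ψ₀ gb
          simp [hb1]
    · -- inductive step
      set p := toAdd (ψ ga) with hp
      set q := toAdd (ψ gb) with hq'
      apply step ψ (shear (p / q))
      set ψ' := ψ.comp (shear (p / q)).toMonoidHom with hψ'
      have ha' : toAdd (ψ' ga) = q := by simp [ψ', hq']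
      have hb' : toAdd (ψ' gb) = p % q := by
        simp only [ψ', MonoidHom.comp_apply, MulEquiv.coe_toMonoidHom, shear_b, _root_.map_mul,
          _root_.map_zpow, toAdd_mul, toAdd_zpow]
        rw [Int.emod_def]
        rw [← hp, ← hq', smul_eq_mul]
        ring
      have hsurj' : Function.Surjective ψ' := hψ.comp (shear (p / q)).surjective
      refine ih (toAdd (ψ' gb)).natAbs ?_ ψ' hsurj' rfl
      rw [hb', ← hn]
      have h0 : 0 ≤ p % q := Int.emod_nonneg p hq
      have h1 : p % q < |q| := by rw [Int.abs_eq_natAbs]; exact Int.emod_lt p hq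
      rw [Int.abs_eq_natAbs] at h1
      omega

end Stmt4Aux

namespace Stmt4Aux

lemma conjKer_mul {G Γ : Type*} [Group G] [Group Γ] (φ : G →* Γ) (g₁ g₂ : G) :
    conjKer φ (g₁ * g₂) = (conjKer φ g₁).comp (conjKer φ g₂) :=
  MonoidHom.ext fun x => Subtype.ext (by simp [conjKer, mul_assoc])

lemma conjAb_mul {G Γ : Type*} [Group G] [Group Γ] (φ : G →* Γ) (g₁ g₂ : G) :
    conjAb φ (g₁ * g₂) = (conjAb φ g₁).comp (conjAb φ g₂) := by
  apply Abelianization.hom_ext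
  apply MonoidHom.ext
  intro x
  simp [conjAb, Abelianization.map_of, conjKer_mul]

lemma conjAb_ker {G Γ : Type*} [Group G] [Group Γ] (φ : G →* Γ) {k : G} (hk : k ∈ φ.ker) :
    conjAb φ k = MonoidHom.id _ := by
  apply Abelianization.hom_ext
  apply MonoidHom.ext
  intro x
  show conjAb φ k (Abelianization.of x) = Abelianization.of x
  rw [conjAb, Abelianization.map_of]
  have h : conjKer φ k x = ⟨k, hk⟩ * x * (⟨k, hk⟩ : φ.ker)⁻¹ := Subtype.ext rfl
  rw [h, _root_.map_mul, _root_.map_mul, _root_.map_inv, mul_right_comm, mul_inv_cancel, one_mul]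

lemma conjAb_congr {G Γ : Type*} [Group G] [Group Γ] (φ : G →* Γ) {h h' : G}
    (hh : φ h = φ h') : conjAb φ h = conjAb φ h' := by
  have hk : h * h'⁻¹ ∈ φ.ker := by
    rw [MonoidHom.mem_ker, _root_.map_mul, _root_.map_inv, hh, mul_inv_cancel]
  calc conjAb φ h = conjAb φ ((h * h'⁻¹) * h') := by rw [inv_mul_cancel_right]
  _ = (conjAb φ (h * h'⁻¹)).comp (conjAb φ h') := conjAb_mul φ _ _
  _ = conjAb φ h' := by rw [conjAb_ker φ hk, MonoidHom.id_comp]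

section Main

variable (ψ : F2 →* Multiplicative ℤ) (α : F2 ≃* F2)

lemma mem_ker_of (hα : ψ.comp α.toMonoidHom = ψ₀) (x : FreeGroup ℤ) : α (fN x) ∈ ψ.ker := by
  rw [MonoidHom.mem_ker]
  have h := DFunLike.congr_fun hα (fN x)
  simp only [MonoidHom.comp_apply, MulEquiv.coe_toMonoidHom] at h
  rw [h, ψ₀_fN]

def Φ (hα : ψ.comp α.toMonoidHom = ψ₀) : FreeGroup ℤ →* ψ.ker :=
  (α.toMonoidHom.comp fN).codRestrict ψ.ker (fun x => mem_ker_of ψ α hα x)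

@[simp] lemma Φ_coe (hα : ψ.comp α.toMonoidHom = ψ₀) (x : FreeGroup ℤ) : (Φ ψ α hα x : F2) = α (fN x) := rfl

lemma Φ_bij (hα : ψ.comp α.toMonoidHom = ψ₀) : Function.Bijective (Φ ψ α hα) := by
  constructor
  · intro x y hxy
    have h : α (fN x) = α (fN y) := congrArg Subtype.val hxy
    exact fN_inj (α.injective h)
  · rintro ⟨g, hg⟩
    have hg0 : ψ₀ (α.symm g) = 1 := by
      have h := DFunLike.congr_fun hα (α.symm g)
      simp only [MonoidHom.comp_apply, MulEquiv.coe_toMonoidHom, MulEquiv.apply_symm_apply] at h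
      rw [← h]
      exact hg
    obtain ⟨x, hx⟩ := fN_surj_ker (α.symm g) hg0
    refine ⟨x, Subtype.ext ?_⟩
    show α (fN x) = g
    rw [hx, MulEquiv.apply_symm_apply]

noncomputable def ΦE (hα : ψ.comp α.toMonoidHom = ψ₀) : FreeGroup ℤ ≃* ψ.ker := MulEquiv.ofBijective (Φ ψ α hα) (Φ_bij ψ α hα)

def gen (hα : ψ.comp α.toMonoidHom = ψ₀) (m : ℤ) : Abelianization (ψ.ker) := Abelianization.of (Φ ψ α hα (FreeGroup.of m))

lemma Mext (hα : ψ.comp α.toMonoidHom = ψ₀) {X : Type*} [AddCommGroup X] (F G : Additive (Abelianization ψ.ker) →+ X)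
    (h : ∀ m : ℤ, F (Additive.ofMul (gen ψ α hα m)) = G (Additive.ofMul (gen ψ α hα m))) :
    F = G := by
  apply AddMonoidHom.ext; intro x
  obtain ⟨y, rfl⟩ : ∃ y, Additive.ofMul (Abelianization.of (Φ ψ α hα y)) = x := by
    obtain ⟨k, hk⟩ := QuotientGroup.mk_surjective (Additive.toMul x)
    obtain ⟨y, hy⟩ := (Φ_bij ψ α hα).2 k
    exact ⟨y, by rw [hy]; exact congrArg Additive.ofMul hk⟩
  induction y using FreeGroup.induction_on with
  | C1 => simp
  | of m => exact h m
  | inv_of y hy =>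
    rw [_root_.map_inv, _root_.map_inv, ofMul_inv, map_neg, map_neg, hy]
  | mul y z hy hz =>
    rw [_root_.map_mul, _root_.map_mul, ofMul_mul, map_add, map_add, hy, hz]

open LaurentPolynomial in
noncomputable def Lhom : FreeGroup ℤ →* Multiplicative (LaurentPolynomial ℤ) :=
  FreeGroup.lift (fun m => ofAdd (T m : LaurentPolynomial ℤ))

@[simp] lemma Lhom_of (m : ℤ) : Lhom (FreeGroup.of m) = ofAdd (LaurentPolynomial.T m) := by
  simp [Lhom]

noncomputable def Fwd (hα : ψ.comp α.toMonoidHom = ψ₀) :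
    Abelianization ψ.ker →* Multiplicative (LaurentPolynomial ℤ) :=
  Abelianization.lift (Lhom.comp (ΦE ψ α hα).symm.toMonoidHom)

noncomputable def Fwd' (hα : ψ.comp α.toMonoidHom = ψ₀) :
    Additive (Abelianization ψ.ker) →+ LaurentPolynomial ℤ :=
  AddMonoidHom.mk' (fun x => toAdd (Fwd ψ α hα (Additive.toMul x)))
    (fun x y => by
      show toAdd (Fwd ψ α hα (Additive.toMul x * Additive.toMul y)) = _
      rw [_root_.map_mul, toAdd_mul])

lemma Fwd'_gen (hα : ψ.comp α.toMonoidHom = ψ₀) (m : ℤ) :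
    Fwd' ψ α hα (Additive.ofMul (gen ψ α hα m)) = LaurentPolynomial.T m := by
  show toAdd (Fwd ψ α hα (Abelianization.of (Φ ψ α hα (FreeGroup.of m)))) = _
  rw [Fwd, Abelianization.lift_apply_of]
  have h : (ΦE ψ α hα).symm (Φ ψ α hα (FreeGroup.of m)) = FreeGroup.of m :=
    (ΦE ψ α hα).symm_apply_apply (FreeGroup.of m)
  simp only [MonoidHom.comp_apply, MulEquiv.coe_toMonoidHom, h, Lhom_of, toAdd_ofAdd]

noncomputable def Bwd (hα : ψ.comp α.toMonoidHom = ψ₀) :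
    LaurentPolynomial ℤ →+ Additive (Abelianization ψ.ker) :=
  Finsupp.liftAddHom
    (fun m => zmultiplesHom (Additive (Abelianization ψ.ker)) (Additive.ofMul (gen ψ α hα m)))
    |>.comp AddMonoidAlgebra.coeffAddEquiv.toAddMonoidHom

lemma Bwd_T (hα : ψ.comp α.toMonoidHom = ψ₀) (m : ℤ) :
    Bwd ψ α hα (LaurentPolynomial.T m) = Additive.ofMul (gen ψ α hα m) := by
  show Bwd ψ α hα (AddMonoidAlgebra.ofCoeff (Finsupp.single m (1:ℤ)) : LaurentPolynomial ℤ) = _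
  rw [Bwd]
  exact (Finsupp.liftAddHom_apply_single _ m (1:ℤ)).trans (one_zsmul _)

noncomputable def EA (hα : ψ.comp α.toMonoidHom = ψ₀) :
    Additive (Abelianization ψ.ker) ≃+ LaurentPolynomial ℤ where
  toFun := Fwd' ψ α hα
  invFun := Bwd ψ α hα
  left_inv := by
    have key : (Bwd ψ α hα).comp (Fwd' ψ α hα) = AddMonoidHom.id _ := by
      apply Mext ψ α hα
      intro m
      simp only [AddMonoidHom.comp_apply, AddMonoidHom.id_apply, Fwd'_gen, Bwd_T]
    intro x
    exact DFunLike.congr_fun key x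
  right_inv := by
    have key : (Fwd' ψ α hα).comp (Bwd ψ α hα) = AddMonoidHom.id (LaurentPolynomial ℤ) := by
      apply AddMonoidAlgebra.addHom_ext'
      intro m
      apply AddMonoidHom.ext_int
      show Fwd' ψ α hα (Bwd ψ α hα (AddMonoidAlgebra.single m 1)) = AddMonoidAlgebra.single m 1
      have h1 : (AddMonoidAlgebra.single m 1 : LaurentPolynomial ℤ) = LaurentPolynomial.T m := rfl
      rw [h1, Bwd_T, Fwd'_gen]
    intro x
    exact DFunLike.congr_fun key x
  map_add' := (Fwd' ψ α hα).map_add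

end Main

def myMod {R A : Type*} [Ring R] [AddCommGroup A] (E : A ≃+ R) : Module R A where
  smul r x := E.symm (r * E x)
  one_smul x := by show E.symm _ = _; simp
  mul_smul r s x := by
    show E.symm (r * s * E x) = E.symm (r * E (E.symm (s * E x)))
    rw [AddEquiv.apply_symm_apply, mul_assoc]
  smul_zero r := by show E.symm _ = 0; simp
  smul_add r x y := by
    show E.symm (r * E (x + y)) = E.symm (r * E x) + E.symm (r * E y)
    rw [map_add, mul_add, map_add]
  add_smul r s x := by
    show E.symm ((r + s) * E x) = E.symm (r * E x) + E.symm (s * E x)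
    rw [add_mul, map_add]
  zero_smul x := by show E.symm _ = 0; simp

end Stmt4Aux

namespace Stmt4Aux

section Main2

variable (ψ : F2 →* Multiplicative ℤ) (α : F2 ≃* F2)

lemma EA_apply (hα : ψ.comp α.toMonoidHom = ψ₀) (x : Additive (Abelianization ψ.ker)) :
    EA ψ α hα x = Fwd' ψ α hα x := rfl

lemma EA_symm_apply (hα : ψ.comp α.toMonoidHom = ψ₀) (y : LaurentPolynomial ℤ) :
    (EA ψ α hα).symm y = Bwd ψ α hα y := rfl

lemma conj_gen (hα : ψ.comp α.toMonoidHom = ψ₀) (m : ℤ) :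
    conjAb ψ (α ga) (gen ψ α hα m) = gen ψ α hα (m + 1) := by
  rw [gen, conjAb, Abelianization.map_of]
  congr 1
  apply Subtype.ext
  show α ga * (α (fN (FreeGroup.of m)) : F2) * (α ga)⁻¹ = α (fN (FreeGroup.of (m+1)))
  rw [← conj_fN m, _root_.map_mul, _root_.map_mul, _root_.map_inv]

end Main2

end Stmt4Aux

/-- For a surjection `ψ : F(2) → ℤ`, the abelianization of `ker ψ`, with its conjugation
`ℤ[ℤ] = ℤ[t,t⁻¹]`-module structure, is a free module of rank 1. -/
theorem stmt4 (ψ : FreeGroup (Fin 2) →* Multiplicative ℤ) (hψ : Function.Surjective ψ) :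
    ∃ inst : Module (LaurentPolynomial ℤ) (Additive (Abelianization ψ.ker)),
      FreeRankOneWithConjAction ψ inst := by
  obtain ⟨α, hα⟩ := Stmt4Aux.exists_aut ψ hψ
  letI inst := Stmt4Aux.myMod (Stmt4Aux.EA ψ α hα)
  refine ⟨inst, ?_, ⟨?_⟩⟩
  · intro h x hh
    have h1 := DFunLike.congr_fun hα Stmt4Aux.ga
    simp only [MonoidHom.comp_apply, MulEquiv.coe_toMonoidHom] at h1
    have hga : ψ h = ψ (α Stmt4Aux.ga) := by
      rw [h1, Stmt4Aux.ψ₀_a, hh]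
    have hcong : conjAb ψ h = conjAb ψ (α Stmt4Aux.ga) := Stmt4Aux.conjAb_congr ψ hga
    have main : ∀ m : ℤ, (LaurentPolynomial.T 1 : LaurentPolynomial ℤ) •
        (Additive.ofMul (Stmt4Aux.gen ψ α hα m)) =
        Additive.ofMul (conjAb ψ (α Stmt4Aux.ga) (Stmt4Aux.gen ψ α hα m)) := by
      intro m
      rw [Stmt4Aux.conj_gen]
      show (Stmt4Aux.EA ψ α hα).symm
        (LaurentPolynomial.T 1 * (Stmt4Aux.EA ψ α hα) (Additive.ofMul (Stmt4Aux.gen ψ α hα m))) = _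
      rw [Stmt4Aux.EA_apply, Stmt4Aux.Fwd'_gen, ← LaurentPolynomial.T_add,
        Stmt4Aux.EA_symm_apply, Stmt4Aux.Bwd_T, add_comm]
    have hFG : (AddMonoidHom.mk'
          (fun x : Additive (Abelianization ψ.ker) =>
            (LaurentPolynomial.T 1 : LaurentPolynomial ℤ) • x) (fun a b => smul_add _ a b)) =
        AddMonoidHom.mk'
          (fun x => Additive.ofMul (conjAb ψ (α Stmt4Aux.ga) (Additive.toMul x)))
          (fun a b => by
            show Additive.ofMul (conjAb ψ _ (Additive.toMul a * Additive.toMul b)) = _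
            rw [_root_.map_mul]
            rfl) :=
      Stmt4Aux.Mext ψ α hα _ _ (fun m => main m)
    have hx := DFunLike.congr_fun hFG (Additive.ofMul x)
    rw [hcong]
    exact hx
  · exact (Stmt4Aux.EA ψ α hα).toLinearEquiv (fun c x => by
      show Stmt4Aux.EA ψ α hα ((Stmt4Aux.EA ψ α hα).symm (c * Stmt4Aux.EA ψ α hα x)) =
        c • Stmt4Aux.EA ψ α hα x
      rw [AddEquiv.apply_symm_apply, smul_eq_mul])
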